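/- Let b ∈ ℝ^N be a vector of Euclidean norm 1 and let L ⊂ ℝ^N be an m-dimensional linear subspace. Then the average over all 2^N · N! signed permutations (π,ε) of the Euclidean length of the orthogonal projection of (π,ε)b onto L does not exceed √m/√N. -/

import Mathlib

open scoped BigOperators

noncomputable section

/-- The action of a signed permutation `(π, ε)` on a vector `b ∈ ℝ^N`:
`((π,ε)b)_i = ε_i b_{π(i)}`. -/
def signedPermAct {N : ℕ} (π : Equiv.Perm (Fin N)) (ε : Fin N → ℤˣ)
    (b : EuclideanSpace ℝ (Fin N)) : EuclideanSpace ℝ (Fin N) :=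
  WithLp.toLp 2 (fun i => ((ε i : ℤ) : ℝ) * b (π i))

/-- Sum over all sign vectors of `ε i * ε j` vanishes when `i ≠ j`. -/
lemma sum_signs_mul {N : ℕ} {i j : Fin N} (hij : i ≠ j) :
    ∑ ε : Fin N → ℤˣ, (((ε i : ℤ) : ℝ) * ((ε j : ℤ) : ℝ)) = 0 := by
  classical
  have hinv : Function.Involutive
      (fun ε : Fin N → ℤˣ => Function.update ε i (-(ε i))) := by
    intro ε
    simp [Function.update_idem]
  set σ : Equiv.Perm (Fin N → ℤˣ) := hinv.toPerm _ with hσ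
  have hcomp := Equiv.sum_comp σ
    (fun ε : Fin N → ℤˣ => (((ε i : ℤ) : ℝ) * ((ε j : ℤ) : ℝ)))
  have hneg : ∀ ε : Fin N → ℤˣ,
      (((σ ε i : ℤ) : ℝ) * ((σ ε j : ℤ) : ℝ))
        = -((((ε i : ℤ) : ℝ) * ((ε j : ℤ) : ℝ))) := by
    intro ε
    have h1 : σ ε i = -(ε i) := by simp [hσ, Function.Involutive.toPerm]
    have h2 : σ ε j = ε j := by
      simp [hσ, Function.Involutive.toPerm, Function.update_of_ne hij.symm]
    rw [h1, h2]
    push_cast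
    ring
  rw [Finset.sum_congr rfl (fun ε _ => hneg ε), Finset.sum_neg_distrib] at hcomp
  linarith

lemma sum_signs_sq {N : ℕ} (i : Fin N) :
    ∑ ε : Fin N → ℤˣ, (((ε i : ℤ) : ℝ) * ((ε i : ℤ) : ℝ)) = 2 ^ N := by
  have h : ∀ ε : Fin N → ℤˣ, (((ε i : ℤ) : ℝ) * ((ε i : ℤ) : ℝ)) = 1 := by
    intro ε
    rcases Int.units_eq_one_or (ε i) with h | h <;> simp [h]
  rw [Finset.sum_congr rfl (fun ε _ => h ε), Finset.sum_const, Finset.card_univ]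
  simp [Fintype.card_fun, Fintype.card_units_int]

/-- Sum over all permutations of `b (π i) ^ 2` is `(N-1)! ∑ b j ^ 2`,
stated as `N! / N` when `∑ b j ^ 2 = 1`. -/
lemma sum_perm_sq {N : ℕ} (hN : 0 < N) (b : Fin N → ℝ)
    (hb : ∑ j, b j ^ 2 = 1) (i : Fin N) :
    ∑ π : Equiv.Perm (Fin N), b (π i) ^ 2 = (N.factorial : ℝ) / N := by
  classical
  set c : Fin N → ℝ := fun i => ∑ π : Equiv.Perm (Fin N), b (π i) ^ 2 with hc
  have hconst : ∀ i' j' : Fin N, c i' = c j' := by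
    intro i' j'
    have := Equiv.sum_comp (Equiv.mulRight (Equiv.swap i' j'))
      (fun π : Equiv.Perm (Fin N) => b (π i') ^ 2)
    simp only [Equiv.coe_mulRight, Equiv.Perm.mul_apply, Equiv.swap_apply_left] at this
    rw [hc]
    exact this.symm
  have htot : ∑ i', c i' = (N.factorial : ℝ) := by
    rw [hc]
    rw [Finset.sum_comm]
    have : ∀ π : Equiv.Perm (Fin N), ∑ i', b (π i') ^ 2 = 1 := by
      intro π
      rw [Equiv.sum_comp π (fun j => b j ^ 2)]
      exact hb
    rw [Finset.sum_congr rfl (fun π _ => this π), Finset.sum_const, Finset.card_univ]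
    simp [Fintype.card_perm]
  have hNc : (N : ℝ) * c i = (N.factorial : ℝ) := by
    rw [← htot, Finset.sum_congr rfl (fun j _ => hconst j i), Finset.sum_const,
      Finset.card_univ, Fintype.card_fin, nsmul_eq_mul]
  have hNpos : (0 : ℝ) < N := by exact_mod_cast hN
  rw [eq_div_iff (ne_of_gt hNpos)]
  linear_combination hNc

/-- Key second-moment computation: for any vector `v`, the sum over all signed
permutations of `⟪v, (π,ε)b⟫ ^ 2` equals `2^N · (N!/N) · ∑ v i ^ 2`. -/
lemma sum_inner_sq_signed_perm {N : ℕ} (hN : 0 < N) (b v : EuclideanSpace ℝ (Fin N))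
    (hb : ∑ j, b j ^ 2 = 1) :
    ∑ π : Equiv.Perm (Fin N), ∑ ε : Fin N → ℤˣ,
        (inner ℝ v (signedPermAct π ε b) : ℝ) ^ 2
      = 2 ^ N * ((N.factorial : ℝ) / N) * ∑ i, v i ^ 2 := by
  classical
  have hinner : ∀ (π : Equiv.Perm (Fin N)) (ε : Fin N → ℤˣ),
      (inner ℝ v (signedPermAct π ε b) : ℝ)
        = ∑ i, v i * (((ε i : ℤ) : ℝ) * b (π i)) := by
    intro π ε
    simp [PiLp.inner_apply, signedPermAct, RCLike.inner_apply, mul_comm]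
  have hstep : ∀ π : Equiv.Perm (Fin N),
      ∑ ε : Fin N → ℤˣ, (inner ℝ v (signedPermAct π ε b) : ℝ) ^ 2
        = 2 ^ N * ∑ i, v i ^ 2 * b (π i) ^ 2 := by
    intro π
    have expand : ∀ ε : Fin N → ℤˣ,
        (inner ℝ v (signedPermAct π ε b) : ℝ) ^ 2
          = ∑ i, ∑ j, (v i * b (π i) * (v j * b (π j)))
              * ((((ε i : ℤ) : ℝ)) * (((ε j : ℤ) : ℝ))) := by
      intro ε
      rw [hinner, sq, Finset.sum_mul_sum]
      congr 1; funext i; congr 1; funext j; ring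
    calc ∑ ε : Fin N → ℤˣ, (inner ℝ v (signedPermAct π ε b) : ℝ) ^ 2
        = ∑ ε : Fin N → ℤˣ, ∑ i, ∑ j, (v i * b (π i) * (v j * b (π j)))
            * ((((ε i : ℤ) : ℝ)) * (((ε j : ℤ) : ℝ))) :=
          Finset.sum_congr rfl (fun ε _ => expand ε)
      _ = ∑ i, ∑ j, (v i * b (π i) * (v j * b (π j)))
            * ∑ ε : Fin N → ℤˣ, ((((ε i : ℤ) : ℝ)) * (((ε j : ℤ) : ℝ))) := by
          rw [Finset.sum_comm]
          refine Finset.sum_congr rfl (fun i _ => ?_)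
          rw [Finset.sum_comm]
          refine Finset.sum_congr rfl (fun j _ => ?_)
          rw [Finset.mul_sum]
      _ = ∑ i, (v i * b (π i) * (v i * b (π i))) * (2 ^ N : ℝ) := by
          refine Finset.sum_congr rfl (fun i _ => ?_)
          rw [Finset.sum_eq_single i]
          · rw [sum_signs_sq]
          · intro j _ hji
            rw [sum_signs_mul (Ne.symm hji), mul_zero]
          · intro h; exact absurd (Finset.mem_univ i) h
      _ = 2 ^ N * ∑ i, v i ^ 2 * b (π i) ^ 2 := by
          rw [Finset.mul_sum]
          refine Finset.sum_congr rfl (fun i _ => ?_)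
          ring
  calc ∑ π : Equiv.Perm (Fin N), ∑ ε : Fin N → ℤˣ,
          (inner ℝ v (signedPermAct π ε b) : ℝ) ^ 2
      = ∑ π : Equiv.Perm (Fin N), 2 ^ N * ∑ i, v i ^ 2 * b (π i) ^ 2 :=
        Finset.sum_congr rfl (fun π _ => hstep π)
    _ = 2 ^ N * ∑ i, v i ^ 2 * ((N.factorial : ℝ) / N) := by
        rw [← Finset.mul_sum, Finset.sum_comm]
        congr 1
        refine Finset.sum_congr rfl (fun i _ => ?_)
        rw [← Finset.mul_sum, sum_perm_sq hN b hb i]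
    _ = 2 ^ N * ((N.factorial : ℝ) / N) * ∑ i, v i ^ 2 := by
        rw [Finset.mul_sum, Finset.mul_sum]
        exact Finset.sum_congr rfl fun i _ => by ring

set_option maxHeartbeats 1000000 in
/-- **Lemma 3.2.** Let `b ∈ ℝ^N` be a unit vector and `L ⊆ ℝ^N` an `m`-dimensional linear
subspace. Then the average over all `2^N · N!` signed permutations `(π, ε)` of the
Euclidean length of the orthogonal projection of `(π,ε)b` onto `L` does not exceed
`√m/√N`. -/
theorem average_norm_proj_signed_perm_le (N m : ℕ) (b : EuclideanSpace ℝ (Fin N))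
    (hb : ‖b‖ = 1) (L : Submodule ℝ (EuclideanSpace ℝ (Fin N)))
    (hL : Module.finrank ℝ L = m) :
    (∑ π : Equiv.Perm (Fin N), ∑ ε : Fin N → ℤˣ,
        ‖Submodule.orthogonalProjection L (signedPermAct π ε b)‖) / (2 ^ N * N.factorial) ≤
      Real.sqrt m / Real.sqrt N := by
  classical
  -- N > 0
  have hN : 0 < N := by
    by_contra h
    push_neg at h
    interval_cases N
    have : b = 0 := Subsingleton.elim _ _
    rw [this, norm_zero] at hb
    norm_num at hb
  have hb2 : ∑ j, b j ^ 2 = 1 := by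
    have h := real_inner_self_eq_norm_sq b
    rw [hb, one_pow] at h
    simp only [PiLp.inner_apply, RCLike.inner_apply, conj_trivial] at h
    simpa [sq] using h
  haveI : FiniteDimensional ℝ L := inferInstance
  set P := Submodule.orthogonalProjection L with hP
  set u : OrthonormalBasis (Fin (Module.finrank ℝ L)) ℝ L := stdOrthonormalBasis ℝ L
  -- second moment computation
  have hsq : ∑ π : Equiv.Perm (Fin N), ∑ ε : Fin N → ℤˣ,
      ‖P (signedPermAct π ε b)‖ ^ 2
      = m * (2 ^ N * ((N.factorial : ℝ) / N)) := by
    have hnorm : ∀ x : EuclideanSpace ℝ (Fin N),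
        ‖P x‖ ^ 2 = ∑ k, (inner ℝ ((u k : EuclideanSpace ℝ (Fin N))) x : ℝ) ^ 2 := by
      intro x
      have h1 := u.sum_inner_mul_inner (P x) (P x)
      have h2 : (inner ℝ (P x) (P x) : ℝ) = ‖P x‖ ^ 2 := real_inner_self_eq_norm_sq _
      rw [h2] at h1
      rw [← h1]
      refine Finset.sum_congr rfl (fun k _ => ?_)
      have e1 : (inner ℝ (u k) (P x) : ℝ) = inner ℝ ((u k : EuclideanSpace ℝ (Fin N))) x := by
        rw [hP]; exact Submodule.inner_orthogonalProjection_eq_of_mem_left (K := L) (u k) x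
      have e2 : (inner ℝ (P x) (u k) : ℝ) = inner ℝ ((u k : EuclideanSpace ℝ (Fin N))) x :=
        (real_inner_comm _ _).trans e1
      rw [e2, e1, sq]
    have huk : ∀ k, ∑ i, ((u k : EuclideanSpace ℝ (Fin N)) i) ^ 2 = 1 := by
      intro k
      have hnk : ‖(u k : EuclideanSpace ℝ (Fin N))‖ = 1 := by
        rw [Submodule.norm_coe]
        exact u.orthonormal.1 k
      have h := real_inner_self_eq_norm_sq ((u k : EuclideanSpace ℝ (Fin N)))
      rw [hnk, one_pow] at h
      simp only [PiLp.inner_apply, RCLike.inner_apply, conj_trivial] at h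
      simpa [sq] using h
    calc ∑ π : Equiv.Perm (Fin N), ∑ ε : Fin N → ℤˣ, ‖P (signedPermAct π ε b)‖ ^ 2
        = ∑ π : Equiv.Perm (Fin N), ∑ ε : Fin N → ℤˣ, ∑ k,
            (inner ℝ ((u k : EuclideanSpace ℝ (Fin N))) (signedPermAct π ε b) : ℝ) ^ 2 := by
          refine Finset.sum_congr rfl (fun π _ => Finset.sum_congr rfl (fun ε _ => ?_))
          exact hnorm _
      _ = ∑ π : Equiv.Perm (Fin N), ∑ k, ∑ ε : Fin N → ℤˣ,
            (inner ℝ ((u k : EuclideanSpace ℝ (Fin N))) (signedPermAct π ε b) : ℝ) ^ 2 :=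
          Finset.sum_congr rfl fun π _ => Finset.sum_comm
      _ = ∑ k, ∑ π : Equiv.Perm (Fin N), ∑ ε : Fin N → ℤˣ,
            (inner ℝ ((u k : EuclideanSpace ℝ (Fin N))) (signedPermAct π ε b) : ℝ) ^ 2 :=
          Finset.sum_comm
      _ = ∑ k : Fin (Module.finrank ℝ L), 2 ^ N * ((N.factorial : ℝ) / N) := by
          refine Finset.sum_congr rfl (fun k _ => ?_)
          rw [sum_inner_sq_signed_perm hN b _ hb2, huk k, mul_one]
      _ = m * (2 ^ N * ((N.factorial : ℝ) / N)) := by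
          rw [Finset.sum_const, Finset.card_univ, Fintype.card_fin, hL, nsmul_eq_mul]
  -- Cauchy–Schwarz
  set S1 := ∑ π : Equiv.Perm (Fin N), ∑ ε : Fin N → ℤˣ,
      ‖P (signedPermAct π ε b)‖ with hS1
  have hCS : S1 ^ 2 ≤ (N.factorial * 2 ^ N : ℝ) *
      (m * (2 ^ N * ((N.factorial : ℝ) / N))) := by
    rw [← hsq]
    have h1 : S1 = ∑ p : Equiv.Perm (Fin N) × (Fin N → ℤˣ),
        ‖P (signedPermAct p.1 p.2 b)‖ := by
      rw [hS1, Fintype.sum_prod_type]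
    have h2 : ∑ π : Equiv.Perm (Fin N), ∑ ε : Fin N → ℤˣ, ‖P (signedPermAct π ε b)‖ ^ 2
        = ∑ p : Equiv.Perm (Fin N) × (Fin N → ℤˣ), ‖P (signedPermAct p.1 p.2 b)‖ ^ 2 := by
      rw [Fintype.sum_prod_type]
    rw [h1, h2]
    have := sq_sum_le_card_mul_sum_sq
      (s := (Finset.univ : Finset (Equiv.Perm (Fin N) × (Fin N → ℤˣ))))
      (f := fun p => ‖P (signedPermAct p.1 p.2 b)‖)
    refine this.trans_eq ?_
    congr 1
    rw [Finset.card_univ, Fintype.card_prod, Fintype.card_perm, Fintype.card_fun,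
      Fintype.card_units_int, Fintype.card_fin]
    push_cast
    ring
  -- positivity facts
  have hC : (0 : ℝ) < 2 ^ N * N.factorial := by positivity
  have hS1nonneg : 0 ≤ S1 := by
    apply Finset.sum_nonneg
    intro π _
    exact Finset.sum_nonneg fun ε _ => norm_nonneg _
  have hrhs : Real.sqrt m / Real.sqrt N = Real.sqrt ((m : ℝ) / N) := by
    rw [Real.sqrt_div (by positivity) _]
  rw [hrhs]
  rw [Real.le_sqrt (div_nonneg hS1nonneg hC.le) (by positivity)]
  have hNpos : (0 : ℝ) < N := by exact_mod_cast hN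
  rw [div_pow]
  rw [div_le_div_iff₀ (by positivity) hNpos]
  -- S1^2 * N ≤ m * (2^N * N!)^2
  have key : S1 ^ 2 * N ≤ (m : ℝ) * ((2 ^ N * N.factorial : ℝ)) ^ 2 := by
    have hfac : (0 : ℝ) < N.factorial := by exact_mod_cast N.factorial_pos
    have := mul_le_mul_of_nonneg_right hCS (le_of_lt hNpos)
    calc S1 ^ 2 * (N : ℝ)
        ≤ (N.factorial * 2 ^ N : ℝ) * (m * (2 ^ N * ((N.factorial : ℝ) / N))) * N := this
      _ = (m : ℝ) * ((2 ^ N * N.factorial : ℝ)) ^ 2 := by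
          field_simp
  exact key
end
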